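/- The function λ(Ĥ) = λ₁·(1 − W(λ̂·Ĥ·exp(Ĥ))/Ĥ), where λ₁ > 0, λ̂ = λ₂/λ₁ ∈ (0,1) and W is the Lambert W function, is monotone decreasing in Ĥ > 0, satisfies lim_{Ĥ → 0⁺} λ(Ĥ) = λ₁ − λ₂ > 0, and lim_{Ĥ → ∞} λ(Ĥ) = 0. -/

import Mathlib

open Real Filter Set

theorem decay_rate_monotone_in_delay
    (lam1 lam2 : ℝ) (h1 : 0 < lam2) (h2 : lam2 < lam1)
    (W : ℝ → ℝ)
    (hW : ∀ z : ℝ, 0 ≤ z → W z * Real.exp (W z) = z ∧ 0 ≤ W z)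
    (lam : ℝ → ℝ)
    (hlam : ∀ H : ℝ, 0 < H →
      lam H = lam1 * (1 - W (lam2 / lam1 * H * Real.exp H) / H)) :
    AntitoneOn lam (Ioi 0) ∧
    0 < lam1 - lam2 ∧
    Tendsto lam (nhdsWithin 0 (Ioi 0)) (nhds (lam1 - lam2)) ∧
    Tendsto lam atTop (nhds 0) := by
  have hlam1 : 0 < lam1 := h1.trans h2
  set L : ℝ := lam2 / lam1 with hLdef
  have hL0 : 0 < L := div_pos h1 hlam1
  have hL1 : L < 1 := (div_lt_one hlam1).mpr h2
  have hLlam : lam1 * L = lam2 := by rw [hLdef]; field_simp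
  -- monotonicity of x ↦ x * exp x on [0, ∞)
  have mono : ∀ a b : ℝ, 0 ≤ a → 0 ≤ b → a * Real.exp a ≤ b * Real.exp b → a ≤ b := by
    intro a b ha hb hab
    by_contra hlt
    push_neg at hlt
    have h0a : 0 < a := hb.trans_lt hlt
    have he : Real.exp b < Real.exp a := Real.exp_lt_exp.mpr hlt
    nlinarith [Real.exp_pos a, Real.exp_pos b]
  -- key bounds on w H := W (L * H * exp H)
  have bounds : ∀ H : ℝ, 0 < H →
      let w := W (L * H * Real.exp H)
      w * Real.exp w = L * H * Real.exp H ∧ 0 ≤ w ∧ w ≤ H ∧ L * H ≤ w ∧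
      w ≤ L * H * Real.exp ((1 - L) * H) ∧ H + Real.log L ≤ w := by
    intro H hH
    have hz : (0:ℝ) ≤ L * H * Real.exp H := by positivity
    obtain ⟨hwz, hw0⟩ := hW _ hz
    set w := W (L * H * Real.exp H) with hwdef
    have hwH : w ≤ H := by
      apply mono w H hw0 hH.le
      rw [hwz]
      nlinarith [Real.exp_pos H]
    have hwL : L * H ≤ w := by
      apply mono (L * H) w (by positivity) hw0
      rw [hwz]
      have : Real.exp (L * H) ≤ Real.exp H := Real.exp_le_exp.mpr (by nlinarith)
      nlinarith [Real.exp_pos (L * H)]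
    refine ⟨hwz, hw0, hwH, hwL, ?_, ?_⟩
    · -- w ≤ L * H * exp ((1-L) * H)
      have h1' : w * Real.exp (L * H) ≤ w * Real.exp w :=
        mul_le_mul_of_nonneg_left (Real.exp_le_exp.mpr hwL) hw0
      have h2' : w * Real.exp (L * H) ≤ L * H * Real.exp H := by rw [← hwz]; exact h1'
      have hexp : Real.exp H = Real.exp ((1 - L) * H) * Real.exp (L * H) := by
        rw [← Real.exp_add]; ring_nf
      rw [hexp] at h2'
      have := le_of_mul_le_mul_right (by linarith [h2'] : w * Real.exp (L * H) ≤
        (L * H * Real.exp ((1 - L) * H)) * Real.exp (L * H)) (Real.exp_pos (L * H))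
      linarith
    · -- H + log L ≤ w
      have h1' : w * Real.exp w ≤ H * Real.exp w :=
        mul_le_mul_of_nonneg_right hwH (Real.exp_pos w).le
      rw [hwz] at h1'
      have h2' : L * Real.exp H ≤ Real.exp w := by
        have := (mul_le_mul_iff_right₀ hH).mp (by linarith : H * (L * Real.exp H) ≤ H * Real.exp w)
        linarith
      have h3' : Real.exp (H + Real.log L) ≤ Real.exp w := by
        rw [Real.exp_add, Real.exp_log hL0]; linarith [h2']
      exact Real.exp_le_exp.mp h3'
  -- Antitone
  have hanti : AntitoneOn lam (Ioi 0) := by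
    intro H1 hH1 H2 hH2 h12
    simp only [mem_Ioi] at hH1 hH2
    obtain ⟨e1, w10, w1H, w1L, _, _⟩ := bounds H1 hH1
    obtain ⟨e2, w20, w2H, w2L, _, _⟩ := bounds H2 hH2
    set w1 := W (L * H1 * Real.exp H1)
    set w2 := W (L * H2 * Real.exp H2)
    rw [hlam H1 hH1, hlam H2 hH2]
    have key : w1 / H1 ≤ w2 / H2 := by
      rw [div_le_div_iff₀ hH1 hH2]
      -- show (w1/H1 * H2) * exp (w1/H1 * H2) ≤ w2 * exp w2
      have ha : (0:ℝ) ≤ w1 / H1 * H2 := by positivity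
      have hm : w1 / H1 * H2 * Real.exp (w1 / H1 * H2) ≤ w2 * Real.exp w2 := by
        rw [e2]
        set r := w1 / H1 with hr
        have hr0 : 0 ≤ r := by positivity
        have hr1 : r ≤ 1 := by rw [hr, div_le_one hH1]; exact w1H
        have hH1ne : H1 ≠ 0 := hH1.ne'
        have hrH : r * H1 = w1 := by rw [hr]; field_simp
        have hid : r * Real.exp (r * H1) = L * Real.exp H1 := by
          rw [hrH, hr, div_mul_eq_mul_div, div_eq_iff hH1ne, e1]; ring
        -- want r * H2 * exp (r * H2) ≤ L * H2 * exp H2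
        have hmain : r * Real.exp (r * H2) ≤ L * Real.exp H2 := by
          have hkey : r * Real.exp (r * H2 + H1) ≤ r * Real.exp (r * H1 + H2) := by
            apply mul_le_mul_of_nonneg_left _ hr0
            apply Real.exp_le_exp.mpr
            nlinarith
          rw [Real.exp_add, Real.exp_add] at hkey
          have h5 : r * Real.exp (r * H2) * Real.exp H1 ≤ L * Real.exp H2 * Real.exp H1 := by
            calc r * Real.exp (r * H2) * Real.exp H1 = r * (Real.exp (r * H2) * Real.exp H1) := by ring
            _ ≤ r * (Real.exp (r * H1) * Real.exp H2) := hkey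
            _ = (r * Real.exp (r * H1)) * Real.exp H2 := by ring
            _ = L * Real.exp H1 * Real.exp H2 := by rw [hid]
            _ = L * Real.exp H2 * Real.exp H1 := by ring
          exact le_of_mul_le_mul_right h5 (Real.exp_pos H1)
        nlinarith [hH2, hmain]
      have := mono _ _ ha w20 hm
      have hH1ne : H1 ≠ 0 := hH1.ne'
      calc w1 * H2 = w1 / H1 * H2 * H1 := by field_simp
      _ ≤ w2 * H1 := mul_le_mul_of_nonneg_right this hH1.le
    nlinarith [key]
  refine ⟨hanti, by linarith, ?_, ?_⟩
  · -- limit at 0⁺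
    have hlow : Tendsto (fun H : ℝ => lam1 * (1 - L * Real.exp ((1 - L) * H)))
        (nhdsWithin 0 (Ioi 0)) (nhds (lam1 - lam2)) := by
      have hc : Continuous fun H : ℝ => lam1 * (1 - L * Real.exp ((1 - L) * H)) :=
        continuous_const.mul (continuous_const.sub (continuous_const.mul
          (Real.continuous_exp.comp (continuous_const.mul continuous_id))))
      have h0 : lam1 * (1 - L * Real.exp ((1 - L) * 0)) = lam1 - lam2 := by
        rw [mul_zero, Real.exp_zero, mul_one, mul_sub, mul_one, hLlam]
      have h6 := (hc.tendsto 0).mono_left (nhdsWithin_le_nhds (s := Ioi (0:ℝ)))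
      rwa [h0] at h6
    apply tendsto_of_tendsto_of_tendsto_of_le_of_le' hlow tendsto_const_nhds
    · filter_upwards [self_mem_nhdsWithin] with H hH
      simp only [mem_Ioi] at hH
      obtain ⟨e, w0, wH, wL, wU, wE⟩ := bounds H hH
      rw [hlam H hH]
      have : W (L * H * Real.exp H) / H ≤ L * Real.exp ((1 - L) * H) := by
        rw [div_le_iff₀ hH]
        calc W (L * H * Real.exp H) ≤ L * H * Real.exp ((1 - L) * H) := wU
        _ = L * Real.exp ((1 - L) * H) * H := by ring
      nlinarith
    · filter_upwards [self_mem_nhdsWithin] with H hH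
      simp only [mem_Ioi] at hH
      obtain ⟨e, w0, wH, wL, wU, wE⟩ := bounds H hH
      rw [hlam H hH]
      have : L ≤ W (L * H * Real.exp H) / H := by
        rw [le_div_iff₀ hH]; linarith [wL]
      nlinarith
  · -- limit at ∞
    have hup : Tendsto (fun H : ℝ => lam1 * (-Real.log L) / H) atTop (nhds 0) :=
      Tendsto.div_atTop tendsto_const_nhds tendsto_id
    apply tendsto_of_tendsto_of_tendsto_of_le_of_le' tendsto_const_nhds hup
    · filter_upwards [eventually_gt_atTop (0:ℝ)] with H hH
      obtain ⟨e, w0, wH, wL, wU, wE⟩ := bounds H hH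
      rw [hlam H hH]
      have : W (L * H * Real.exp H) / H ≤ 1 := by
        rw [div_le_one hH]; exact wH
      nlinarith
    · filter_upwards [eventually_gt_atTop (0:ℝ)] with H hH
      obtain ⟨e, w0, wH, wL, wU, wE⟩ := bounds H hH
      rw [hlam H hH]
      have h4 : (H - W (L * H * Real.exp H)) / H ≤ (-Real.log L) / H :=
        (div_le_div_iff_of_pos_right hH).mpr (by linarith [wE])
      have h5 : 1 - W (L * H * Real.exp H) / H = (H - W (L * H * Real.exp H)) / H := by
        field_simp
      rw [h5]
      calc lam1 * ((H - W (L * H * Real.exp H)) / H) ≤ lam1 * ((-Real.log L) / H) :=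
            mul_le_mul_of_nonneg_left h4 hlam1.le
      _ = lam1 * (-Real.log L) / H := by ring
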